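/- Suppose in addition that ∫ ψ†(x) dP(x) + ∫ φ†(y) dQ(y) ≤ Corr(P, Q) + ε for some ε ≥ 0. Then the inverse generative property for the single-discriminator method holds: W₂²((∇φ†)_*Q, P) ≤ ε / β†. -/

import Mathlib

open MeasureTheory ENNReal
open scoped RealInnerProductSpace

/-- First-order strong convexity inequality for a differentiable `β`-strongly convex
function. -/
lemma strong_grad_ineq {E : Type*} [NormedAddCommGroup E] [InnerProductSpace ℝ E]
    [CompleteSpace E] {ψ : E → ℝ} (hψ : Differentiable ℝ ψ) {β : ℝ}
    (hsc : ConvexOn ℝ Set.univ (fun x => ψ x - β / 2 * ‖x‖ ^ 2)) (a b : E) :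
    ψ b + ⟪gradient ψ b, a - b⟫ + β / 2 * ‖a - b‖ ^ 2 ≤ ψ a := by
  set v := a - b with hv
  set k : E → ℝ := fun x => ψ x - β / 2 * ‖x‖ ^ 2 with hk
  set h : ℝ → ℝ := fun t => k (b + t • v) with hh
  have hconv : ConvexOn ℝ Set.univ h := by
    have hcomp := hsc.comp_affineMap (AffineMap.lineMap b a)
    have heq : (k ∘ (AffineMap.lineMap b a : ℝ →ᵃ[ℝ] E)) = h := by
      funext t
      simp only [Function.comp_apply, AffineMap.lineMap_apply, hh, hv, vsub_eq_sub,
        vadd_eq_add]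
      rw [add_comm]
    rw [heq, Set.preimage_univ] at hcomp
    exact hcomp
  have hline : HasDerivAt (fun t : ℝ => b + t • v) v 0 := by
    simpa using ((hasDerivAt_id (0:ℝ)).smul_const v).const_add b
  have h0 : b + (0:ℝ) • v = b := by simp
  have part1 : HasDerivAt (fun t : ℝ => ψ (b + t • v)) ⟪gradient ψ b, v⟫ 0 := by
    have hf : HasFDerivAt ψ (fderiv ℝ ψ b) (b + (0:ℝ) • v) := by
      rw [h0]; exact (hψ b).hasFDerivAt
    have hcomp := hf.comp_hasDerivAt 0 hline
    have : ⟪gradient ψ b, v⟫ = fderiv ℝ ψ b v := by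
      rw [gradient, InnerProductSpace.toDual_symm_apply]
    rw [this]
    exact hcomp
  have part2 : HasDerivAt (fun t : ℝ => β / 2 * ‖b + t • v‖ ^ 2) (β * ⟪b, v⟫) 0 := by
    have hq : (fun t : ℝ => ‖b + t • v‖ ^ 2)
        = fun t => ‖b‖ ^ 2 + 2 * ⟪b, v⟫ * t + ‖v‖ ^ 2 * t ^ 2 := by
      funext t
      rw [norm_add_sq_real, real_inner_smul_right, norm_smul]
      simp [mul_pow, sq_abs]
      ring
    have h1 : HasDerivAt (fun t : ℝ => 2 * ⟪b, v⟫ * t) (2 * ⟪b, v⟫) 0 := by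
      simpa using (hasDerivAt_id (0:ℝ)).const_mul (2 * ⟪b, v⟫)
    have h2 : HasDerivAt (fun t : ℝ => ‖v‖ ^ 2 * t ^ 2) 0 0 := by
      simpa using (hasDerivAt_pow 2 (0:ℝ)).const_mul (‖v‖ ^ 2)
    have h3 : HasDerivAt (fun t : ℝ => ‖b‖ ^ 2 + 2 * ⟪b, v⟫ * t + ‖v‖ ^ 2 * t ^ 2)
        (2 * ⟪b, v⟫) 0 := by
      have := (h1.const_add (‖b‖ ^ 2)).add h2; rw [add_zero] at this; exact this
    have key : HasDerivAt (fun t : ℝ => β / 2 * (‖b‖ ^ 2 + 2 * ⟪b, v⟫ * t + ‖v‖ ^ 2 * t ^ 2))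
        (β * ⟪b, v⟫) 0 := by
      have := h3.const_mul (β / 2)
      rw [show β * ⟪b, v⟫ = β / 2 * (2 * ⟪b, v⟫) by ring]
      exact this
    rw [show (fun t : ℝ => β / 2 * ‖b + t • v‖ ^ 2)
        = fun t => β / 2 * (‖b‖ ^ 2 + 2 * ⟪b, v⟫ * t + ‖v‖ ^ 2 * t ^ 2) from by
      funext t; rw [congrFun hq t]]
    exact key
  have hd : HasDerivAt h (⟪gradient ψ b, v⟫ - β * ⟪b, v⟫) 0 := part1.sub part2
  have hs := hconv.le_slope_of_hasDerivAt (Set.mem_univ 0) (Set.mem_univ 1) zero_lt_one hd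
  rw [slope_def_field] at hs
  have hba : b + v = a := by rw [hv]; abel
  have hh1 : h 1 = ψ a - β / 2 * ‖a‖ ^ 2 := by simp [hh, hk, hba]
  have hh0 : h 0 = ψ b - β / 2 * ‖b‖ ^ 2 := by simp [hh, hk]
  rw [hh1, hh0] at hs
  have hsub : ⟪b, v⟫ = ⟪b, a⟫ - ‖b‖ ^ 2 := by
    rw [hv, inner_sub_right, real_inner_self_eq_norm_sq]
  have hns : ‖v‖ ^ 2 = ‖a‖ ^ 2 - 2 * ⟪b, a⟫ + ‖b‖ ^ 2 := by
    rw [hv, norm_sub_sq_real, real_inner_comm]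
  rw [hsub] at hs
  rw [hns]
  simp only [sub_zero, div_one] at hs
  linarith

/-- The gradient of any function on a Euclidean space is measurable. -/
lemma measurable_gradient_aux {D : ℕ} (f : EuclideanSpace ℝ (Fin D) → ℝ) :
    Measurable (gradient f) := by
  have h1 : Measurable (fderiv ℝ f) := measurable_fderiv ℝ f
  have h2 : Continuous fun L : EuclideanSpace ℝ (Fin D) →L[ℝ] ℝ =>
      (InnerProductSpace.toDual ℝ (EuclideanSpace ℝ (Fin D))).symm L :=
    (InnerProductSpace.toDual ℝ _).symm.continuous
  exact h2.measurable.comp h1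

/-- Squared Wasserstein-2 distance: infimum over couplings of `∫ ‖x - y‖² / 2`. -/
noncomputable def W2sq {E : Type*} [NormedAddCommGroup E] [MeasurableSpace E]
    (μ ν : Measure E) : ℝ≥0∞ :=
  ⨅ (π : Measure (E × E)) (_ : IsProbabilityMeasure π)
    (_ : π.map Prod.fst = μ) (_ : π.map Prod.snd = ν),
    ∫⁻ p, ENNReal.ofReal (‖p.1 - p.2‖ ^ 2 / 2) ∂π

/-- Inverse generative property of the single-discriminator method:
if `∫ ψ† dP + ∫ φ† dQ ≤ Corr(P,Q) + ε`, then `W₂²((∇φ†)_*Q, P) ≤ ε/β†`. -/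
theorem single_discriminator_inverse_generative {D : ℕ}
    (P Q : Measure (EuclideanSpace ℝ (Fin D)))
    [IsProbabilityMeasure P] [IsProbabilityMeasure Q]
    (hP2 : Integrable (fun x => ‖x‖ ^ 2) P)
    (hQ2 : Integrable (fun y => ‖y‖ ^ 2) Q)
    -- Brenier potentials
    (ψs φs : EuclideanSpace ℝ (Fin D) → ℝ)
    (hψs : Differentiable ℝ ψs) (hψsc : ConvexOn ℝ Set.univ ψs)
    (hφs : Differentiable ℝ φs) (hφsc : ConvexOn ℝ Set.univ φs)
    (hinv : ∀ y, gradient ψs (gradient φs y) = y)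
    (hQP : Q.map (gradient φs) = P)
    (hPQ : P.map (gradient ψs) = Q)
    -- discriminator and its conjugate
    (ψd : EuclideanSpace ℝ (Fin D) → ℝ) (hψd : Differentiable ℝ ψd)
    (βd : ℝ) (hβd : 0 < βd)
    (hstrong : ConvexOn ℝ Set.univ (fun x => ψd x - βd / 2 * ‖x‖ ^ 2))
    (φd : EuclideanSpace ℝ (Fin D) → ℝ) (hφd : Differentiable ℝ φd)
    (hφdc : ConvexOn ℝ Set.univ φd)
    (hconj : ∀ y, φd y = ⟪gradient φd y, y⟫ - ψd (gradient φd y))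
    (hdinv : ∀ y, gradient ψd (gradient φd y) = y)
    -- integrability of all the integrals involved
    (hI1 : Integrable ψd P)
    (hI2 : Integrable φd Q)
    (hI3 : Integrable (fun y => ⟪y, gradient φs y⟫) Q)
    (ε : ℝ) (hε : 0 ≤ ε)
    (hclose : (∫ x, ψd x ∂P) + (∫ y, φd y ∂Q) ≤ (∫ y, ⟪y, gradient φs y⟫ ∂Q) + ε) :
    W2sq (Q.map (gradient φd)) P ≤ ENNReal.ofReal (ε / βd) := by
  set T : EuclideanSpace ℝ (Fin D) → EuclideanSpace ℝ (Fin D) := gradient φd with hT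
  set S : EuclideanSpace ℝ (Fin D) → EuclideanSpace ℝ (Fin D) := gradient φs with hS
  have hmT : Measurable T := measurable_gradient_aux φd
  have hmS : Measurable S := measurable_gradient_aux φs
  have hmTS : Measurable (fun y => (T y, S y)) := hmT.prodMk hmS
  set π := Q.map (fun y => (T y, S y)) with hπ
  have hπprob : IsProbabilityMeasure π := Measure.isProbabilityMeasure_map hmTS.aemeasurable
  have hfst : π.map Prod.fst = Q.map T := by
    rw [hπ, Measure.map_map measurable_fst hmTS]
    rfl
  have hsnd : π.map Prod.snd = P := by
    rw [hπ, Measure.map_map measurable_snd hmTS]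
    exact hQP
  have hW : W2sq (Q.map T) P ≤ ∫⁻ p, ENNReal.ofReal (‖p.1 - p.2‖ ^ 2 / 2) ∂π :=
    iInf_le_of_le π (iInf_le_of_le hπprob (iInf_le_of_le hfst
      (iInf_le_of_le hsnd le_rfl)))
  have hmeasF : Measurable
      (fun p : EuclideanSpace ℝ (Fin D) × EuclideanSpace ℝ (Fin D) =>
        ENNReal.ofReal (‖p.1 - p.2‖ ^ 2 / 2)) := by
    apply Measurable.ennreal_ofReal
    fun_prop
  have hlin : ∫⁻ p, ENNReal.ofReal (‖p.1 - p.2‖ ^ 2 / 2) ∂π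
      = ∫⁻ y, ENNReal.ofReal (‖T y - S y‖ ^ 2 / 2) ∂Q := by
    rw [hπ, lintegral_map hmeasF hmTS]
  set g : EuclideanSpace ℝ (Fin D) → ℝ :=
    fun y => (ψd (S y) + φd y - ⟪y, S y⟫) / βd with hg
  have hpt : ∀ y, ‖T y - S y‖ ^ 2 / 2 ≤ g y := by
    intro y
    have key := strong_grad_ineq hψd hstrong (S y) (T y)
    rw [hdinv y, inner_sub_right] at key
    have hψT : ψd (T y) = ⟪T y, y⟫ - φd y := by have := hconj y; linarith
    rw [hψT] at key
    have hnorm : ‖S y - T y‖ = ‖T y - S y‖ := norm_sub_rev _ _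
    rw [hnorm] at key
    have hcomm : ⟪T y, y⟫ = ⟪y, T y⟫ := real_inner_comm _ _
    rw [hg]
    rw [le_div_iff₀ hβd]
    nlinarith [key]
  have hg0 : ∀ y, 0 ≤ g y := fun y => le_trans (by positivity) (hpt y)
  have hI1' : Integrable (fun y => ψd (S y)) Q := by
    have h' : Integrable ψd (Q.map S) := by rw [hS, hQP]; exact hI1
    exact (integrable_map_measure hψd.continuous.aestronglyMeasurable
      hmS.aemeasurable).mp h'
  have hgint : Integrable g Q := by
    have := ((hI1'.add hI2).sub hI3).div_const βd
    exact this
  have hbound : ∫⁻ y, ENNReal.ofReal (‖T y - S y‖ ^ 2 / 2) ∂Q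
      ≤ ∫⁻ y, ENNReal.ofReal (g y) ∂Q :=
    lintegral_mono fun y => ENNReal.ofReal_le_ofReal (hpt y)
  have hofReal : ∫⁻ y, ENNReal.ofReal (g y) ∂Q = ENNReal.ofReal (∫ y, g y ∂Q) :=
    (ofReal_integral_eq_lintegral_ofReal hgint (ae_of_all _ hg0)).symm
  have hSint : ∫ y, ψd (S y) ∂Q = ∫ x, ψd x ∂P := by
    rw [← hQP, integral_map hmS.aemeasurable hψd.continuous.aestronglyMeasurable]
  have hgval : ∫ y, g y ∂Q ≤ ε / βd := by
    have h1 : ∫ y, g y ∂Q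
        = (∫ y, (ψd (S y) + φd y - ⟪y, S y⟫) ∂Q) / βd := by
      rw [hg, integral_div]
    have h2 := integral_sub (hI1'.add hI2) hI3
    have h2' := integral_add hI1' hI2
    simp only [Pi.add_apply, Pi.sub_apply] at h2 h2'
    rw [h1, h2, h2', hSint]
    gcongr
    linarith
  calc W2sq (Q.map T) P ≤ ∫⁻ p, ENNReal.ofReal (‖p.1 - p.2‖ ^ 2 / 2) ∂π := hW
    _ = ∫⁻ y, ENNReal.ofReal (‖T y - S y‖ ^ 2 / 2) ∂Q := hlin
    _ ≤ ∫⁻ y, ENNReal.ofReal (g y) ∂Q := hbound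
    _ = ENNReal.ofReal (∫ y, g y ∂Q) := hofReal
    _ ≤ ENNReal.ofReal (ε / βd) := ENNReal.ofReal_le_ofReal hgval
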